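/- Assume the Continuum Hypothesis (2^ℵ0 = ℵ1). Then there exists an ℵ0-coloring of the real numbers such that there are no four pairwise distinct reals e1, e2, e3, e4 of the same color satisfying e1 + e2 = e3 + e4. -/

import Mathlib

open Cardinal

theorem key_lemma (ι : Type) [LinearOrder ι]
    (hcnt : ∀ i : ι, Set.Countable {j : ι | j < i}) (B : Module.Basis ι ℚ ℝ) :
    ∃ COL : ℝ → ℕ,
      ¬ ∃ e1 e2 e3 e4 : ℝ,
        e1 ≠ e2 ∧ e1 ≠ e3 ∧ e1 ≠ e4 ∧ e2 ≠ e3 ∧ e2 ≠ e4 ∧ e3 ≠ e4 ∧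
        COL e1 = COL e2 ∧ COL e2 = COL e3 ∧ COL e3 = COL e4 ∧
        e1 + e2 = e3 + e4 := by
  classical
  have hne : Nonempty ι := B.index_nonempty
  have hF : ∀ i : ι, ∃ f : {j : ι | j < i} → ℕ, Function.Injective f := fun i =>
    Set.countable_iff_exists_injective.mp (hcnt i)
  choose F hFinj using hF
  set g : ι → ι → ℕ := fun t j => if h : j < t then F t ⟨j, h⟩ + 1 else 0 with hg
  have g_injOn : ∀ t : ι, Set.InjOn (g t) (Set.Iic t) := by
    intro t a ha b hb hab
    simp only [hg] at hab
    by_cases h1 : a < t <;> by_cases h2 : b < t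
    · rw [dif_pos h1, dif_pos h2] at hab
      have h' : F t ⟨a, h1⟩ = F t ⟨b, h2⟩ := Nat.succ_injective hab
      exact congrArg Subtype.val (hFinj t h')
    · rw [dif_pos h1, dif_neg h2] at hab; exact absurd hab (Nat.succ_ne_zero _)
    · rw [dif_neg h1, dif_pos h2] at hab; exact absurd hab.symm (Nat.succ_ne_zero _)
    · have ha' : a = t := le_antisymm ha (not_lt.mp h1)
      have hb' : b = t := le_antisymm hb (not_lt.mp h2)
      rw [ha', hb']
  set R : ℝ → (ι →₀ ℚ) := fun x => B.repr x with hRdef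
  set top : ℝ → ι := fun x =>
    if h : (R x).support.Nonempty then (R x).support.max' h else hne.some with htop
  have hle : ∀ x : ℝ, ((R x).support : Set ι) ⊆ Set.Iic (top x) := by
    intro x j hj
    have hj' : j ∈ (R x).support := hj
    have hs : (R x).support.Nonempty := ⟨j, hj'⟩
    simp only [htop, dif_pos hs, Set.mem_Iic]
    exact Finset.le_max' _ j hj'
  set col : ℝ → (ℕ →₀ ℚ) := fun x => (R x).mapDomain (g (top x)) with hcol
  have happly : ∀ (x : ℝ) (j : ι), j ≤ top x → col x (g (top x) j) = R x j := by
    intro x j hj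
    exact Finsupp.mapDomain_apply' (Set.Iic (top x)) _ (hle x) (g_injOn _) hj
  have hzero : ∀ x : ℝ, col x 0 = R x (top x) := by
    intro x
    have h0 : g (top x) (top x) = 0 := by simp [hg]
    conv_lhs => rw [← h0]
    exact happly x (top x) le_rfl
  have htopmem : ∀ x : ℝ, x ≠ 0 → R x (top x) ≠ 0 := by
    intro x hx
    have hRx : R x ≠ 0 := fun h => hx (B.repr.map_eq_zero_iff.mp h)
    have hs : (R x).support.Nonempty := Finsupp.support_nonempty_iff.mpr hRx
    have : top x ∈ (R x).support := by
      simp only [htop, dif_pos hs]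
      exact Finset.max'_mem _ hs
    exact Finsupp.mem_support_iff.mp this
  have hinj_same_top : ∀ x y : ℝ, col x = col y → top x = top y → x = y := by
    intro x y hcxy ht
    apply B.repr.injective
    ext j
    show R x j = R y j
    by_cases hx : j ∈ (R x).support
    · have hjx : j ≤ top x := hle x hx
      have e1 := happly x j hjx
      have e2 := happly y j (ht ▸ hjx)
      rw [← e1, ← e2, hcxy, ht]
    · by_cases hy : j ∈ (R y).support
      · have hjy : j ≤ top y := hle y hy
        have e1 := happly x j (ht ▸ hjy)
        have e2 := happly y j hjy
        rw [← e1, ← e2, hcxy, ht]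
      · rw [Finsupp.notMem_support_iff.mp hx, Finsupp.notMem_support_iff.mp hy]
  obtain ⟨enc, henc⟩ : ∃ f : (ℕ →₀ ℚ) → ℕ, Function.Injective f :=
    Countable.exists_injective_nat _
  refine ⟨fun x => enc (col x), ?_⟩
  rintro ⟨e1, e2, e3, e4, h12, h13, h14, h23, h24, h34, k12, k23, k34, hsum⟩
  have c12 : col e1 = col e2 := henc k12
  have c23 : col e2 = col e3 := henc k23
  have c34 : col e3 = col e4 := henc k34
  have c13 : col e1 = col e3 := c12.trans c23
  have c14 : col e1 = col e4 := c13.trans c34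
  have c24 : col e2 = col e4 := c23.trans c34
  have hcol0 : col 0 = 0 := by
    simp only [hcol, hRdef, map_zero]
    exact Finsupp.mapDomain_zero
  have hxy0 : ∀ x y : ℝ, col x = col y → x = 0 → y = 0 := by
    intro x y hc hx
    by_contra hy
    apply htopmem y hy
    rw [← hzero y, ← hc, hx, hcol0]
    rfl
  have nz1 : e1 ≠ 0 := fun h => h12 (h.trans (hxy0 e1 e2 c12 h).symm)
  have nz2 : e2 ≠ 0 := fun h => h12 ((hxy0 e2 e1 c12.symm h).trans h.symm)
  have nz3 : e3 ≠ 0 := fun h => h34 (h.trans (hxy0 e3 e4 c34 h).symm)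
  have nz4 : e4 ≠ 0 := fun h => h34 ((hxy0 e4 e3 c34.symm h).trans h.symm)
  set q : ℚ := R e1 (top e1) with hqdef
  have hq : q ≠ 0 := htopmem e1 nz1
  have hq2 : R e2 (top e2) = q := by rw [← hzero, ← c12, hzero]
  have hq3 : R e3 (top e3) = q := by rw [← hzero, ← c13, hzero]
  have hq4 : R e4 (top e4) = q := by rw [← hzero, ← c14, hzero]
  set β : ι := max (max (top e1) (top e2)) (max (top e3) (top e4)) with hβ
  have hb1 : top e1 ≤ β := le_trans (le_max_left _ _) (le_max_left _ _)
  have hb2 : top e2 ≤ β := le_trans (le_max_right _ _) (le_max_left _ _)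
  have hb3 : top e3 ≤ β := le_trans (le_max_left _ _) (le_max_right _ _)
  have hb4 : top e4 ≤ β := le_trans (le_max_right _ _) (le_max_right _ _)
  have coef0 : ∀ x : ℝ, top x < β → R x β = 0 := by
    intro x hx
    by_contra h
    exact absurd (hle x (Finsupp.mem_support_iff.mpr h)) (not_le.mpr hx)
  have hsum' : R e1 β + R e2 β = R e3 β + R e4 β := by
    have h := congrArg (fun z => (B.repr z) β) hsum
    simpa [hRdef, map_add] using h
  have main12 : (top e1 = β ∨ top e2 = β) → (top e3 = β ∨ top e4 = β) := by
    intro h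
    by_contra hc
    push_neg at hc
    have h3 : R e3 β = 0 := coef0 e3 (lt_of_le_of_ne hb3 hc.1)
    have h4 : R e4 β = 0 := coef0 e4 (lt_of_le_of_ne hb4 hc.2)
    rw [h3, h4, add_zero] at hsum'
    rcases h with h1 | h1
    · have e1β : R e1 β = q := by rw [← h1]
      by_cases h2' : top e2 = β
      · have e2β : R e2 β = q := by rw [← h2']; exact hq2
        rw [e1β, e2β] at hsum'
        exact hq (by linarith)
      · have e2β : R e2 β = 0 := coef0 e2 (lt_of_le_of_ne hb2 h2')
        rw [e1β, e2β, add_zero] at hsum'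
        exact hq hsum'
    · have e2β : R e2 β = q := by rw [← h1]; exact hq2
      by_cases h1' : top e1 = β
      · have e1β : R e1 β = q := by rw [← h1']
        rw [e1β, e2β] at hsum'
        exact hq (by linarith)
      · have e1β : R e1 β = 0 := coef0 e1 (lt_of_le_of_ne hb1 h1')
        rw [e1β, e2β, zero_add] at hsum'
        exact hq hsum'
  have main34 : (top e3 = β ∨ top e4 = β) → (top e1 = β ∨ top e2 = β) := by
    intro h
    by_contra hc
    push_neg at hc
    have h1 : R e1 β = 0 := coef0 e1 (lt_of_le_of_ne hb1 hc.1)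
    have h2 : R e2 β = 0 := coef0 e2 (lt_of_le_of_ne hb2 hc.2)
    rw [h1, h2, add_zero] at hsum'
    rcases h with h3 | h3
    · have e3β : R e3 β = q := by rw [← h3]; exact hq3
      by_cases h4' : top e4 = β
      · have e4β : R e4 β = q := by rw [← h4']; exact hq4
        rw [e3β, e4β] at hsum'
        exact hq (by linarith)
      · have e4β : R e4 β = 0 := coef0 e4 (lt_of_le_of_ne hb4 h4')
        rw [e3β, e4β, add_zero] at hsum'
        exact hq hsum'.symm
    · have e4β : R e4 β = q := by rw [← h3]; exact hq4
      by_cases h3' : top e3 = β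
      · have e3β : R e3 β = q := by rw [← h3']; exact hq3
        rw [e3β, e4β] at hsum'
        exact hq (by linarith)
      · have e3β : R e3 β = 0 := coef0 e3 (lt_of_le_of_ne hb3 h3')
        rw [e3β, e4β, zero_add] at hsum'
        exact hq hsum'.symm
  have hattain : (top e1 = β ∨ top e2 = β) ∨ (top e3 = β ∨ top e4 = β) := by
    rcases max_choice (max (top e1) (top e2)) (max (top e3) (top e4)) with h | h
    · rcases max_choice (top e1) (top e2) with h' | h'
      · exact Or.inl (Or.inl ((hβ.trans h).trans h').symm)
      · exact Or.inl (Or.inr ((hβ.trans h).trans h').symm)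
    · rcases max_choice (top e3) (top e4) with h' | h'
      · exact Or.inr (Or.inl ((hβ.trans h).trans h').symm)
      · exact Or.inr (Or.inr ((hβ.trans h).trans h').symm)
  have hL12 : top e1 = β ∨ top e2 = β := hattain.elim id main34
  have hL34 : top e3 = β ∨ top e4 = β := main12 hL12
  rcases hL12 with t1 | t1 <;> rcases hL34 with t3 | t3
  · exact h13 (hinj_same_top e1 e3 c13 (t1.trans t3.symm))
  · exact h14 (hinj_same_top e1 e4 c14 (t1.trans t3.symm))
  · exact h23 (hinj_same_top e2 e3 c23 (t1.trans t3.symm))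
  · exact h24 (hinj_same_top e2 e4 c24 (t1.trans t3.symm))

/-- Assuming CH, there is an `ℵ₀`-coloring of `ℝ` with no four pairwise distinct
monochromatic reals satisfying `e1 + e2 = e3 + e4`. -/
theorem CH_implies_not_S (ch : (2 : Cardinal) ^ Cardinal.aleph0 = Cardinal.aleph 1) :
    ∃ COL : ℝ → ℕ,
      ¬ ∃ e1 e2 e3 e4 : ℝ,
        e1 ≠ e2 ∧ e1 ≠ e3 ∧ e1 ≠ e4 ∧ e2 ≠ e3 ∧ e2 ≠ e4 ∧ e3 ≠ e4 ∧
        COL e1 = COL e2 ∧ COL e2 = COL e3 ∧ COL e3 = COL e4 ∧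
        e1 + e2 = e3 + e4 := by
  classical
  have ch0 : (2 : Cardinal.{0}) ^ Cardinal.aleph0 = Cardinal.aleph 1 :=
    Cardinal.lift_injective (by
      rw [Cardinal.lift_two_power, Cardinal.lift_aleph0, Cardinal.lift_aleph, Ordinal.lift_one]
      exact ch)
  obtain ⟨E⟩ : Nonempty ((Module.Basis.ofVectorSpaceIndex ℚ ℝ) ↪ (Cardinal.aleph 1).ord.ToType) := by
    rw [← Cardinal.le_def]
    rw [Cardinal.mk_toType, Cardinal.card_ord]
    calc #(Module.Basis.ofVectorSpaceIndex ℚ ℝ) ≤ #ℝ := Cardinal.mk_set_le _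
      _ = 2 ^ Cardinal.aleph0 := by rw [Cardinal.mk_real, ← Cardinal.two_power_aleph0]
      _ = Cardinal.aleph 1 := ch0
  refine @key_lemma _ (LinearOrder.lift' E E.injective) (fun i => ?_) (Module.Basis.ofVectorSpace ℚ ℝ)
  have hcnt : (Set.Iio (E i)).Countable :=
    (Cardinal.countable_iff_lt_aleph_one _).mpr (Cardinal.mk_Iio_ord_toType (E i))
  exact hcnt.preimage E.injective
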